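/- The operator T_i^{-1} := t^{-1}(1 - ((x_i - t x_{i+1})/(x_i - x_{i+1}))(1 - s_i)) is a two-sided inverse of T_i = t - ((x_i - t x_{i+1})/(x_i - x_{i+1}))(1 - s_i) on the ring of polynomials in x_1,...,x_n. -/
import Mathlib


/-!
The polynomial representation of the Hecke generator
`T_i = t - ((x_i - t x_{i+1})/(x_i - x_{i+1})) (1 - s_i)` satisfies the quadratic
relation `(T_i - t)(T_i + 1) = 0` on polynomials, i.e. for every polynomial `h`,
`(T_i - t)((T_i + 1) h) = 0`.  We work over the field `ℚ(t)` (realized as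
`RatFunc ℚ` with `t` the variable), and the operator acts on the fraction field
of the polynomial ring, where the division is defined.
-/

noncomputable section

open MvPolynomial

set_option synthInstance.maxHeartbeats 1000000
set_option maxHeartbeats 2000000

/-- the polynomial ring `ℚ(t)[x_1, …, x_n]` -/
abbrev PolyR (n : ℕ) := MvPolynomial (Fin n) (RatFunc ℚ)

/-- its fraction field -/
abbrev FracK (n : ℕ) := FractionRing (PolyR n)

/-- the parameter `t` viewed inside the fraction field -/
def tK (n : ℕ) : FracK n := algebraMap (PolyR n) (FracK n) (C RatFunc.X)

/-- the variable `x_i` viewed inside the fraction field -/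
def XK (n : ℕ) (i : Fin n) : FracK n := algebraMap (PolyR n) (FracK n) (X i)

/-- the transposition of the variables `x_i` and `x_j`, extended to the fraction field -/
def sOp (n : ℕ) (i j : Fin n) : FracK n ≃+* FracK n :=
  IsFractionRing.ringEquivOfRingEquiv
    ((renameEquiv (RatFunc ℚ) (Equiv.swap i j)).toRingEquiv)

lemma sOp_algebraMap (n : ℕ) (i j : Fin n) (p : PolyR n) :
    sOp n i j (algebraMap (PolyR n) (FracK n) p)
      = algebraMap (PolyR n) (FracK n) (rename (Equiv.swap i j) p) := by
  simp [sOp, IsFractionRing.ringEquivOfRingEquiv_algebraMap]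

lemma sOp_t (n : ℕ) (i j : Fin n) : sOp n i j (tK n) = tK n := by
  simp [tK, sOp_algebraMap]

lemma sOp_Xi (n : ℕ) (i j : Fin n) : sOp n i j (XK n i) = XK n j := by
  simp [XK, sOp_algebraMap]

lemma sOp_Xj (n : ℕ) (i j : Fin n) : sOp n i j (XK n j) = XK n i := by
  simp [XK, sOp_algebraMap]

lemma sOp_sOp (n : ℕ) (i j : Fin n) (x : FracK n) : sOp n i j (sOp n i j x) = x := by
  have : ((sOp n i j).toRingHom.comp (sOp n i j).toRingHom) = RingHom.id _ := by
    apply IsLocalization.ringHom_ext (nonZeroDivisors (PolyR n))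
    ext p <;>
    · simp only [RingHom.comp_apply, RingEquiv.toRingHom_eq_coe, RingHom.coe_coe,
        RingHom.id_apply]
      rw [sOp_algebraMap, sOp_algebraMap, rename_rename]
      simp [Function.comp_def]
  exact congrArg (fun f => f x) (congrArg DFunLike.coe this) |>.trans rfl

lemma tK_ne_zero (n : ℕ) : tK n ≠ 0 := by
  simp only [tK, ne_eq, map_eq_zero_iff _ (IsFractionRing.injective (PolyR n) (FracK n))]
  simp [MvPolynomial.C_eq_zero, RatFunc.X_ne_zero]

lemma XK_sub_ne_zero (n : ℕ) (i j : Fin n) (hij : i ≠ j) : XK n i - XK n j ≠ 0 := by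
  rw [XK, XK, ← map_sub, ne_eq,
    map_eq_zero_iff _ (IsFractionRing.injective (PolyR n) (FracK n)), sub_eq_zero]
  exact fun he => hij (MvPolynomial.X_injective he)

/-- the Hecke generator `T = t - ((x_i - t x_j)/(x_i - x_j))(1 - s_{ij})`,
acting on the fraction field of the polynomial ring -/
def TOp (n : ℕ) (i j : Fin n) (h : FracK n) : FracK n :=
  tK n * h - (XK n i - tK n * XK n j) / (XK n i - XK n j) * (h - sOp n i j h)

/-- the inverse Hecke generator `T⁻¹ = t⁻¹(1 - ((x_i - t x_j)/(x_i - x_j))(1 - s_{ij}))` -/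
def TinvOp (n : ℕ) (i j : Fin n) (h : FracK n) : FracK n :=
  (tK n)⁻¹ * (h - (XK n i - tK n * XK n j) / (XK n i - XK n j) * (h - sOp n i j h))

/-- `T_i⁻¹` is a two-sided inverse of `T_i` on the ring of polynomials. -/
theorem hecke_inverse (n : ℕ) (i j : Fin n) (hij : (i : ℕ) + 1 = (j : ℕ))
    (h : PolyR n) :
    TinvOp n i j (TOp n i j (algebraMap (PolyR n) (FracK n) h))
        = algebraMap (PolyR n) (FracK n) h ∧
    TOp n i j (TinvOp n i j (algebraMap (PolyR n) (FracK n) h))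
        = algebraMap (PolyR n) (FracK n) h := by
  have hne : i ≠ j := by
    intro he; rw [he] at hij; omega
  have hτ : tK n ≠ 0 := tK_ne_zero n
  have hfg : XK n i - XK n j ≠ 0 := XK_sub_ne_zero n i j hne
  have hgf : XK n j - XK n i ≠ 0 := XK_sub_ne_zero n j i hne.symm
  set a := algebraMap (PolyR n) (FracK n) h with ha
  have hsb : sOp n i j (sOp n i j a) = a := sOp_sOp n i j a
  simp only [TOp, TinvOp, map_sub, map_mul, map_div₀, sOp_t, sOp_Xi, sOp_Xj, hsb,
    map_inv₀]
  set b := sOp n i j a with hb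
  set τ := tK n
  set f := XK n i
  set g := XK n j
  have hc' : (g - τ * f) / (g - f)
      = 1 + τ - (f - τ * g) / (f - g) := by
    field_simp
    ring
  rw [hc']
  set c := (f - τ * g) / (f - g) with hc
  constructor
  · field_simp
    ring
  · field_simp
    ring
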